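/- Let ℓ ≥ 2 and let R = {±e_i ± e_j : 1 ≤ i < j ≤ ℓ} ⊂ ℝ^ℓ be the root system of type D_ℓ. Then the set Γ = {e_{2h−1} − e_{2h}, e_{2h−1} + e_{2h} : 1 ≤ h ≤ ⌊ℓ/2⌋} is a strongly orthogonal subset of R with 2⌊ℓ/2⌋ elements, and every strongly orthogonal subset of R has at most 2⌊ℓ/2⌋ elements. In particular, when ℓ is odd no strongly orthogonal subset of R has ℓ elements. -/

import Mathlib

/-- A subset `S` of a set `R` of vectors is *strongly orthogonal* (relative to
`R`) if `S ⊆ R` and for all distinct `α, β ∈ S` one has `α ≠ -β`,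
`α + β ∉ R` and `α - β ∉ R`. -/
def IsStronglyOrthSubset {V : Type*} [AddCommGroup V] (R S : Set V) : Prop :=
  S ⊆ R ∧ S.Pairwise fun α β => α ≠ -β ∧ α + β ∉ R ∧ α - β ∉ R

/-- The `i`-th standard basis vector of `ℝⁿ`, in 1-based indexing. -/
noncomputable def stdVec (n : ℕ) (i : ℕ) : EuclideanSpace ℝ (Fin n) :=
  (WithLp.equiv 2 (Fin n → ℝ)).symm fun j => if (j : ℕ) + 1 = i then 1 else 0



noncomputable def rt (l : ℕ) (a b : Fin l) (s t : ℝ) : EuclideanSpace ℝ (Fin l) :=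
  s • EuclideanSpace.single a 1 + t • EuclideanSpace.single b 1

lemma rt_apply {l : ℕ} (a b : Fin l) (s t : ℝ) (k : Fin l) :
    rt l a b s t k = (if k = a then s else 0) + (if k = b then t else 0) := by
  simp [rt, EuclideanSpace.single_apply, mul_ite]

lemma stdVec_apply {l : ℕ} (i : ℕ) (k : Fin l) :
    stdVec l i k = if (k : ℕ) + 1 = i then 1 else 0 := by
  simp [stdVec]

lemma stdVec_eq {l i : ℕ} (hi : 1 ≤ i) (hil : i - 1 < l) :
    stdVec l i = EuclideanSpace.single (⟨i - 1, hil⟩ : Fin l) 1 := by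
  ext k
  simp only [stdVec, WithLp.equiv_symm_apply, PiLp.toLp_apply, EuclideanSpace.single_apply]
  exact if_congr (by simp only [Fin.ext_iff]; exact ⟨by omega, by omega⟩) rfl rfl

noncomputable def suppF (l : ℕ) (x : EuclideanSpace ℝ (Fin l)) : Finset (Fin l) :=
  Finset.univ.filter (fun k => x k ≠ 0)

lemma suppF_rt {l : ℕ} {a b : Fin l} (hab : a ≠ b) {s t : ℝ} (hs : s ≠ 0) (ht : t ≠ 0) :
    suppF l (rt l a b s t) = {a, b} := by
  ext k
  simp only [suppF, Finset.mem_filter, Finset.mem_univ, true_and, rt_apply,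
    Finset.mem_insert, Finset.mem_singleton]
  by_cases h1 : k = a <;> by_cases h2 : k = b <;> simp_all

lemma pair_inj {l : ℕ} {a b a' b' : Fin l} (h1 : a < b) (h2 : a' < b')
    (h : ({a, b} : Finset (Fin l)) = {a', b'}) : a = a' ∧ b = b' := by
  have ha : a = a' ∨ a = b' := by
    have : a ∈ ({a', b'} : Finset (Fin l)) := by rw [← h]; simp
    simpa using this
  have hb : b = a' ∨ b = b' := by
    have : b ∈ ({a', b'} : Finset (Fin l)) := by rw [← h]; simp
    simpa using this
  have ha' : a' = a ∨ a' = b := by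
    have : a' ∈ ({a, b} : Finset (Fin l)) := by rw [h]; simp
    simpa using this
  simp only [Fin.ext_iff] at ha hb ha' ⊢
  rw [Fin.lt_def] at h1 h2
  omega

lemma rt_inj {l : ℕ} {a b a' b' : Fin l} (hab : a < b) (hab' : a' < b') {s t s' t' : ℝ}
    (hs : s ≠ 0) (ht : t ≠ 0) (hs' : s' ≠ 0) (ht' : t' ≠ 0)
    (h : rt l a b s t = rt l a' b' s' t') : a = a' ∧ b = b' ∧ s = s' ∧ t = t' := by
  have hsupp : ({a, b} : Finset (Fin l)) = {a', b'} := by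
    rw [← suppF_rt hab.ne hs ht, ← suppF_rt hab'.ne hs' ht', h]
  obtain ⟨rfl, rfl⟩ := pair_inj hab hab' hsupp
  have e1 : rt l a b s t a = rt l a b s' t' a := by rw [h]
  have e2 : rt l a b s t b = rt l a b s' t' b := by rw [h]
  rw [rt_apply, rt_apply] at e1 e2
  simp [hab.ne, hab.ne'] at e1 e2
  exact ⟨rfl, rfl, e1, e2⟩

lemma memD_iff (l : ℕ) (x : EuclideanSpace ℝ (Fin l)) :
    (∃ i j : ℕ, 1 ≤ i ∧ i < j ∧ j ≤ l ∧
        (x = stdVec l i + stdVec l j ∨ x = stdVec l i - stdVec l j ∨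
         x = -stdVec l i + stdVec l j ∨ x = -stdVec l i - stdVec l j)) ↔
    (∃ a b : Fin l, a < b ∧ ∃ s t : ℝ, (s = 1 ∨ s = -1) ∧ (t = 1 ∨ t = -1) ∧
      x = rt l a b s t) := by
  constructor
  · rintro ⟨i, j, hi, hij, hjl, hx⟩
    have hil : i - 1 < l := by omega
    have hjl' : j - 1 < l := by omega
    refine ⟨⟨i - 1, hil⟩, ⟨j - 1, hjl'⟩, by rw [Fin.lt_def]; simp; omega, ?_⟩
    rw [stdVec_eq hi hil, stdVec_eq (by omega : 1 ≤ j) hjl'] at hx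
    rcases hx with rfl | rfl | rfl | rfl
    · exact ⟨1, 1, Or.inl rfl, Or.inl rfl, by unfold rt; module⟩
    · exact ⟨1, -1, Or.inl rfl, Or.inr rfl, by unfold rt; module⟩
    · exact ⟨-1, 1, Or.inr rfl, Or.inl rfl, by unfold rt; module⟩
    · exact ⟨-1, -1, Or.inr rfl, Or.inr rfl, by unfold rt; module⟩
  · rintro ⟨a, b, hab, s, t, hs, ht, rfl⟩
    refine ⟨(a : ℕ) + 1, (b : ℕ) + 1, by omega, by rw [Fin.lt_def] at hab; omega, by omega, ?_⟩
    have ea : stdVec l ((a : ℕ) + 1) = EuclideanSpace.single a 1 := by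
      rw [stdVec_eq (by omega) (by simpa using a.isLt)]
      congr
    have eb : stdVec l ((b : ℕ) + 1) = EuclideanSpace.single b 1 := by
      rw [stdVec_eq (by omega) (by simpa using b.isLt)]
      congr
    rw [ea, eb]
    rcases hs with rfl | rfl <;> rcases ht with rfl | rfl
    · exact Or.inl (by unfold rt; module)
    · exact Or.inr (Or.inl (by unfold rt; module))
    · exact Or.inr (Or.inr (Or.inl (by unfold rt; module)))
    · exact Or.inr (Or.inr (Or.inr (by unfold rt; module)))

section main
variable {l : ℕ} {R S : Set (EuclideanSpace ℝ (Fin l))}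


variable (hmem : ∀ x, x ∈ R ↔ ∃ a b : Fin l, a < b ∧ ∃ s t : ℝ,
    (s = 1 ∨ s = -1) ∧ (t = 1 ∨ t = -1) ∧ x = rt l a b s t)

include hmem

lemma pair_mem {c d : Fin l} (hcd : c ≠ d) {u v : ℝ}
    (hu : u = 1 ∨ u = -1) (hv : v = 1 ∨ v = -1) :
    u • EuclideanSpace.single c 1 + v • EuclideanSpace.single d 1 ∈ R := by
  rcases lt_or_gt_of_ne hcd with h | h
  · exact (hmem _).2 ⟨c, d, h, u, v, hu, hv, rfl⟩
  · exact (hmem _).2 ⟨d, c, h, v, u, hv, hu, by unfold rt; module⟩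

lemma coord_R {x : EuclideanSpace ℝ (Fin l)} (hx : x ∈ R) (k : Fin l) :
    x k = 0 ∨ x k = 1 ∨ x k = -1 := by
  obtain ⟨a, b, hab, s, t, hs, ht, rfl⟩ := (hmem x).1 hx
  rw [rt_apply]
  have hne := hab.ne
  rcases hs with rfl | rfl <;> rcases ht with rfl | rfl <;>
    split_ifs with h1 h2 <;> simp_all <;> norm_num

lemma three_support {x : EuclideanSpace ℝ (Fin l)} (hx : x ∈ R) {k1 k2 k3 : Fin l}
    (h12 : k1 ≠ k2) (h13 : k1 ≠ k3) (h23 : k2 ≠ k3) :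
    x k1 = 0 ∨ x k2 = 0 ∨ x k3 = 0 := by
  obtain ⟨a, b, hab, s, t, hs, ht, rfl⟩ := (hmem x).1 hx
  have key : ∀ k : Fin l, rt l a b s t k ≠ 0 → k = a ∨ k = b := by
    intro k hk
    rw [rt_apply] at hk
    by_contra hc
    push_neg at hc
    simp [hc.1, hc.2] at hk
  by_contra hc
  push_neg at hc
  rcases key k1 hc.1 with rfl | rfl <;> rcases key k2 hc.2.1 with rfl | rfl <;>
    rcases key k3 hc.2.2 with rfl | rfl <;> simp_all

lemma overlap_contra {α β : EuclideanSpace ℝ (Fin l)} (c x y : Fin l)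
    (hxy : x ≠ y) {u v u' v' : ℝ}
    (hu : u = 1 ∨ u = -1) (hv : v = 1 ∨ v = -1) (hu' : u' = 1 ∨ u' = -1) (hv' : v' = 1 ∨ v' = -1)
    (hα : α = u • EuclideanSpace.single c 1 + v • EuclideanSpace.single x 1)
    (hβ : β = u' • EuclideanSpace.single c 1 + v' • EuclideanSpace.single y 1)
    (haddR : α + β ∉ R) (hsubR : α - β ∉ R) : False := by
  have hv'' : -v' = 1 ∨ -v' = -1 := by rcases hv' with rfl | rfl <;> norm_num
  have : u' = u ∨ u' = -u := by rcases hu with rfl | rfl <;> rcases hu' with rfl | rfl <;> norm_num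
  rcases this with h | h
  · apply hsubR
    have he : α - β = v • EuclideanSpace.single x 1 + (-v') • EuclideanSpace.single y 1 := by
      rw [hα, hβ, h]; module
    rw [he]; exact pair_mem hmem hxy hv hv''
  · apply haddR
    have he : α + β = v • EuclideanSpace.single x 1 + v' • EuclideanSpace.single y 1 := by
      rw [hα, hβ, h]; module
    rw [he]; exact pair_mem hmem hxy hv hv'

/-- supports of distinct strongly-orthogonal elements: equal or disjoint -/
lemma supp_eq_or_disjoint (hS : IsStronglyOrthSubset R S)
    {α β : EuclideanSpace ℝ (Fin l)} (hα : α ∈ S) (hβ : β ∈ S) :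
    suppF l α = suppF l β ∨ Disjoint (suppF l α) (suppF l β) := by
  rcases eq_or_ne α β with rfl | hne
  · exact Or.inl rfl
  obtain ⟨hneg, haddR, hsubR⟩ := hS.2 hα hβ hne
  obtain ⟨a, b, hab, s, t, hs, ht, hαe⟩ := (hmem α).1 (hS.1 hα)
  obtain ⟨a', b', hab', s', t', hs', ht', hβe⟩ := (hmem β).1 (hS.1 hβ)
  have hsne : s ≠ 0 := by rcases hs with rfl | rfl <;> norm_num
  have htne : t ≠ 0 := by rcases ht with rfl | rfl <;> norm_num
  have hsne' : s' ≠ 0 := by rcases hs' with rfl | rfl <;> norm_num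
  have htne' : t' ≠ 0 := by rcases ht' with rfl | rfl <;> norm_num
  rw [hαe, hβe, suppF_rt hab.ne hsne htne, suppF_rt hab'.ne hsne' htne']
  have nab := hab.ne
  have nab' := hab'.ne
  by_cases haa : a = a'
  · subst haa
    by_cases hbb : b = b'
    · subst hbb; exact Or.inl rfl
    · exact absurd (overlap_contra hmem a b b' hbb hs ht hs' ht'
        (by rw [hαe]; unfold rt; module) (by rw [hβe]; unfold rt; module) haddR hsubR) not_false
  · by_cases hab2 : a = b'
    · have hba' : b ≠ a' := by rw [Fin.lt_def] at hab hab'; simp only [ne_eq, Fin.ext_iff] at hab2 ⊢; omega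
      exact absurd (overlap_contra hmem a b a' hba' hs ht ht' hs'
        (by rw [hαe]; unfold rt; module)
        (by rw [hβe, ← hab2]; unfold rt; module) haddR hsubR) not_false
    · by_cases hba : b = a'
      · have hab'' : a ≠ b' := by rw [Fin.lt_def] at hab hab'; simp only [ne_eq, Fin.ext_iff] at hba ⊢; omega
        exact absurd (overlap_contra hmem b a b' hab'' ht hs hs' ht'
          (by rw [hαe]; unfold rt; module)
          (by rw [hβe, ← hba]; unfold rt; module) haddR hsubR) not_false
      · by_cases hbb : b = b'
        · exact absurd (overlap_contra hmem b a a' haa ht hs ht' hs'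
            (by rw [hαe]; unfold rt; module)
            (by rw [hβe, ← hbb]; unfold rt; module) haddR hsubR) not_false
        · right
          rw [Finset.disjoint_left]
          intro k hk hk'
          simp only [Finset.mem_insert, Finset.mem_singleton] at hk hk'
          rcases hk with rfl | rfl <;> rcases hk' with h | h
          · exact haa h
          · exact hab2 h
          · exact hba h
          · exact hbb h

/-- Each support fiber of a strongly orthogonal set has at most 2 elements. -/
lemma fiber_le_two (hS : IsStronglyOrthSubset R S) (hfin : S.Finite)
    (u : Finset (Fin l)) (hu : u ∈ hfin.toFinset.image (suppF l)) :
    (hfin.toFinset.filter (fun x => suppF l x = u)).card ≤ 2 := by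
  obtain ⟨α₀, hα₀, hu0⟩ := Finset.mem_image.1 hu
  rw [Set.Finite.mem_toFinset] at hα₀
  obtain ⟨a, b, hab, s₀, t₀, hs₀, ht₀, hα₀e⟩ := (hmem α₀).1 (hS.1 hα₀)
  have hrep : ∀ x ∈ hfin.toFinset.filter (fun x => suppF l x = u),
      ∃ s t : ℝ, (s = 1 ∨ s = -1) ∧ (t = 1 ∨ t = -1) ∧ x = rt l a b s t := by
    intro x hx
    rw [Finset.mem_filter, Set.Finite.mem_toFinset] at hx
    obtain ⟨a', b', hab', s, t, hs, ht, hxe⟩ := (hmem x).1 (hS.1 hx.1)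
    have hsne : s ≠ 0 := by rcases hs with rfl | rfl <;> norm_num
    have htne : t ≠ 0 := by rcases ht with rfl | rfl <;> norm_num
    have hsne₀ : s₀ ≠ 0 := by rcases hs₀ with rfl | rfl <;> norm_num
    have htne₀ : t₀ ≠ 0 := by rcases ht₀ with rfl | rfl <;> norm_num
    have : ({a', b'} : Finset (Fin l)) = {a, b} := by
      rw [← suppF_rt hab'.ne hsne htne, ← suppF_rt hab.ne hsne₀ htne₀, ← hxe, ← hα₀e, hx.2, ← hu0]
    obtain ⟨rfl, rfl⟩ := pair_inj hab' hab this
    exact ⟨s, t, hs, ht, hxe⟩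
  have hinj : Set.InjOn (fun x : EuclideanSpace ℝ (Fin l) => decide (x a = x b))
      ↑(hfin.toFinset.filter (fun x => suppF l x = u)) := by
    intro x hx y hy hxy
    rw [Finset.mem_coe] at hx hy
    obtain ⟨s, t, hs, ht, rfl⟩ := hrep x hx
    obtain ⟨s', t', hs', ht', rfl⟩ := hrep y hy
    have hx' : rt l a b s t ∈ S := by
      have := (Finset.mem_filter.1 hx).1; rwa [Set.Finite.mem_toFinset] at this
    have hy' : rt l a b s' t' ∈ S := by
      have := (Finset.mem_filter.1 hy).1; rwa [Set.Finite.mem_toFinset] at this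
    have ea : ∀ (p q : ℝ), rt l a b p q a = p := by
      intro p q; rw [rt_apply]; simp [hab.ne, hab.ne']
    have eb : ∀ (p q : ℝ), rt l a b p q b = q := by
      intro p q; rw [rt_apply]; simp [hab.ne, hab.ne']
    simp only [ea, eb, decide_eq_decide] at hxy
    by_contra hne
    have hneg := (hS.2 hx' hy' hne).1
    apply hneg
    have : s = -s' ∧ t = -t' := by
      rcases hs with rfl | rfl <;> rcases ht with rfl | rfl <;>
        rcases hs' with rfl | rfl <;> rcases ht' with rfl | rfl <;>
        first | exact absurd rfl hne | (norm_num at hxy; done) | norm_num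
    rw [this.1, this.2]
    unfold rt; module
  calc (hfin.toFinset.filter (fun x => suppF l x = u)).card
      ≤ (Finset.univ : Finset Bool).card :=
        Finset.card_le_card_of_injOn _ (fun _ _ => Finset.mem_univ _) hinj
    _ = 2 := by simp

lemma card_bound (hS : IsStronglyOrthSubset R S) : S.ncard ≤ 2 * (l / 2) := by
  by_cases hfin : S.Finite
  · set F := hfin.toFinset with hF
    set T := F.image (suppF l) with hT
    have hTcard : ∀ u ∈ T, u.card = 2 := by
      intro u hu
      obtain ⟨α, hα, rfl⟩ := Finset.mem_image.1 hu
      rw [Set.Finite.mem_toFinset] at hα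
      obtain ⟨a, b, hab, s, t, hs, ht, rfl⟩ := (hmem α).1 (hS.1 hα)
      rw [suppF_rt hab.ne (by rcases hs with rfl|rfl <;> norm_num)
        (by rcases ht with rfl|rfl <;> norm_num)]
      rw [Finset.card_insert_of_notMem (by simp [hab.ne]), Finset.card_singleton]
    have hdisj : ∀ u ∈ T, ∀ v ∈ T, u ≠ v → Disjoint u v := by
      intro u hu v hv huv
      obtain ⟨α, hα, rfl⟩ := Finset.mem_image.1 hu
      obtain ⟨β, hβ, rfl⟩ := Finset.mem_image.1 hv
      rw [Set.Finite.mem_toFinset] at hα hβ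
      rcases supp_eq_or_disjoint hmem hS hα hβ with h | h
      · exact absurd h huv
      · exact h
    have hbiu : (T.biUnion id).card = 2 * T.card := by
      rw [show (T.biUnion id) = T.biUnion (fun u => u) from rfl]
      rw [Finset.card_biUnion (fun u hu v hv huv => hdisj u hu v hv huv)]
      rw [Finset.sum_congr rfl (fun u hu => hTcard u hu)]
      simp [mul_comm]
    have hTle : 2 * T.card ≤ l := by
      rw [← hbiu]
      simpa using Finset.card_le_univ (T.biUnion id)
    have hFle : F.card ≤ 2 * T.card := by
      have := Finset.card_eq_sum_card_image (suppF l) F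
      rw [this]
      calc ∑ u ∈ T, (F.filter fun x => suppF l x = u).card
          ≤ ∑ u ∈ T, 2 := Finset.sum_le_sum (fun u hu => fiber_le_two hmem hS hfin u hu)
        _ = 2 * T.card := by simp [mul_comm]
    have hncard : S.ncard = F.card := Set.ncard_eq_toFinset_card S hfin
    omega
  · rw [Set.Infinite.ncard (by simpa using hfin)]
    exact Nat.zero_le _

omit hmem in
lemma rt_at_a {a b : Fin l} (hab : a ≠ b) (s t : ℝ) : rt l a b s t a = s := by
  rw [rt_apply]; simp [hab]

omit hmem in
lemma rt_at_b {a b : Fin l} (hab : a ≠ b) (s t : ℝ) : rt l a b s t b = t := by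
  rw [rt_apply]; simp [hab.symm]

omit hmem in
lemma rt_at_o {a b k : Fin l} (ha : k ≠ a) (hb : k ≠ b) (s t : ℝ) : rt l a b s t k = 0 := by
  rw [rt_apply]; simp [ha, hb]

end main

lemma gamma_rep {l : ℕ} {h : ℕ} (h1 : 1 ≤ h) (h2 : h ≤ l / 2)
    {x : EuclideanSpace ℝ (Fin l)}
    (hx : x = stdVec l (2 * h - 1) - stdVec l (2 * h) ∨
          x = stdVec l (2 * h - 1) + stdVec l (2 * h)) :
    ∃ a b : Fin l, (a : ℕ) = 2 * h - 2 ∧ (b : ℕ) = 2 * h - 1 ∧ a < b ∧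
      ∃ t : ℝ, (t = 1 ∨ t = -1) ∧ x = rt l a b 1 t := by
  refine ⟨⟨2 * h - 2, by omega⟩, ⟨2 * h - 1, by omega⟩, rfl, rfl, by simp only [Fin.mk_lt_mk]; omega, ?_⟩
  have e1 : stdVec l (2 * h - 1) = EuclideanSpace.single (⟨2 * h - 2, by omega⟩ : Fin l) 1 := by
    rw [stdVec_eq (by omega : 1 ≤ 2 * h - 1) (by omega : 2 * h - 1 - 1 < l)]
    congr 1
  have e2 : stdVec l (2 * h) = EuclideanSpace.single (⟨2 * h - 1, by omega⟩ : Fin l) 1 := by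
    rw [stdVec_eq (by omega : 1 ≤ 2 * h) (by omega : 2 * h - 1 < l)]
  rcases hx with rfl | rfl
  · exact ⟨-1, Or.inr rfl, by rw [e1, e2]; unfold rt; module⟩
  · exact ⟨1, Or.inl rfl, by rw [e1, e2]; unfold rt; module⟩

noncomputable def gfun (l : ℕ) (p : ℕ × Bool) : EuclideanSpace ℝ (Fin l) :=
  if p.2 then stdVec l (2 * p.1 - 1) + stdVec l (2 * p.1)
  else stdVec l (2 * p.1 - 1) - stdVec l (2 * p.1)

/-- In the root system of type `D_ℓ`, the set
`Γ = {e_{2h−1} ± e_{2h} : 1 ≤ h ≤ ⌊ℓ/2⌋}` is a strongly orthogonal subset with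
`2⌊ℓ/2⌋` elements, every strongly orthogonal subset has at most `2⌊ℓ/2⌋`
elements, and in particular when `ℓ` is odd no strongly orthogonal subset has
`ℓ` elements. -/
theorem typeD_max_strongly_orthogonal (l : ℕ) (hl : 2 ≤ l)
    (R : Set (EuclideanSpace ℝ (Fin l)))
    (hR : R = {x | ∃ i j : ℕ, 1 ≤ i ∧ i < j ∧ j ≤ l ∧
        (x = stdVec l i + stdVec l j ∨ x = stdVec l i - stdVec l j ∨
         x = -stdVec l i + stdVec l j ∨ x = -stdVec l i - stdVec l j)})
    (Γ : Set (EuclideanSpace ℝ (Fin l)))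
    (hΓ : Γ = {x | ∃ h : ℕ, 1 ≤ h ∧ h ≤ l / 2 ∧
        (x = stdVec l (2 * h - 1) - stdVec l (2 * h) ∨
         x = stdVec l (2 * h - 1) + stdVec l (2 * h))}) :
    IsStronglyOrthSubset R Γ ∧ Γ.ncard = 2 * (l / 2) ∧
      (∀ S : Set (EuclideanSpace ℝ (Fin l)),
        IsStronglyOrthSubset R S → S.ncard ≤ 2 * (l / 2)) ∧
      (Odd l → ∀ S : Set (EuclideanSpace ℝ (Fin l)),
        IsStronglyOrthSubset R S → S.ncard ≠ l) := by
  subst hR hΓ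
  have hmem : ∀ x : EuclideanSpace ℝ (Fin l),
      x ∈ {x : EuclideanSpace ℝ (Fin l) | ∃ i j : ℕ, 1 ≤ i ∧ i < j ∧ j ≤ l ∧
        (x = stdVec l i + stdVec l j ∨ x = stdVec l i - stdVec l j ∨
         x = -stdVec l i + stdVec l j ∨ x = -stdVec l i - stdVec l j)} ↔
      ∃ a b : Fin l, a < b ∧ ∃ s t : ℝ,
        (s = 1 ∨ s = -1) ∧ (t = 1 ∨ t = -1) ∧ x = rt l a b s t :=
    fun x => memD_iff l x
  have hbound := fun S hS => card_bound hmem (S := S) hS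
  refine ⟨⟨?_, ?_⟩, ?_, hbound, fun hodd S hS hcard => ?_⟩
  · -- Γ ⊆ R
    rintro x ⟨h, h1, h2, hx⟩
    refine ⟨2 * h - 1, 2 * h, by omega, by omega, by omega, ?_⟩
    rcases hx with rfl | rfl
    · exact Or.inr (Or.inl rfl)
    · exact Or.inl rfl
  · -- pairwise
    rintro α ⟨h, h1, h2, hx⟩ β ⟨h', h1', h2', hx'⟩ hne
    obtain ⟨a, b, hav, hbv, hab0, tα, htα, hαe⟩ := gamma_rep h1 h2 hx
    obtain ⟨a', b', hav', hbv', hab0', tβ, htβ, hβe⟩ := gamma_rep h1' h2' hx'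
    have hab : a ≠ b := hab0.ne
    have hab' : a' ≠ b' := hab0'.ne
    rcases eq_or_ne h h' with rfl | hhh
    · -- same h
      have haa : a = a' := Fin.ext (by omega)
      have hbb : b = b' := Fin.ext (by omega)
      rw [← haa, ← hbb] at hβe
      have htne : tα ≠ tβ := fun hc => hne (by rw [hαe, hβe, hc])
      refine ⟨?_, ?_, ?_⟩
      · intro hc
        have e : α a = (-β) a := by rw [hc]
        simp only [PiLp.neg_apply] at e
        rw [hαe, hβe, rt_at_a hab, rt_at_a hab] at e
        norm_num at e
      · intro hc
        have h2c : (α + β) a = 2 := by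
          rw [PiLp.add_apply, hαe, hβe, rt_at_a hab, rt_at_a hab]; norm_num
        rcases coord_R hmem hc a with h0 | h0 | h0 <;> rw [h2c] at h0 <;> norm_num at h0
      · intro hc
        have h2c : (α - β) b = tα - tβ := by
          rw [PiLp.sub_apply, hαe, hβe, rt_at_b hab, rt_at_b hab]
        have habs : tα - tβ = 2 ∨ tα - tβ = -2 := by
          rcases htα with rfl | rfl <;> rcases htβ with rfl | rfl <;> simp_all <;> norm_num
        rcases coord_R hmem hc b with h0 | h0 | h0 <;> rw [h2c] at h0 <;>
          rcases habs with he | he <;> rw [he] at h0 <;> norm_num at h0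
    · -- different h
      have d1 : a ≠ a' := by rw [ne_eq, Fin.ext_iff]; omega
      have d2 : a ≠ b' := by rw [ne_eq, Fin.ext_iff]; omega
      have d3 : b ≠ a' := by rw [ne_eq, Fin.ext_iff]; omega
      have d4 : b ≠ b' := by rw [ne_eq, Fin.ext_iff]; omega
      have htne0 : tα ≠ 0 := by rcases htα with rfl | rfl <;> norm_num
      refine ⟨?_, ?_, ?_⟩
      · intro hc
        have e : α a = (-β) a := by rw [hc]
        simp only [PiLp.neg_apply] at e
        rw [hαe, hβe, rt_at_a hab, rt_at_o d1 d2] at e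
        norm_num at e
      · intro hc
        rcases three_support hmem hc hab d1 d3 with h0 | h0 | h0 <;>
            rw [PiLp.add_apply, hαe, hβe] at h0
        · rw [rt_at_a hab, rt_at_o d1 d2] at h0; norm_num at h0
        · rw [rt_at_b hab, rt_at_o d3 d4] at h0; simp at h0; exact htne0 h0
        · rw [rt_at_o d1.symm d3.symm, rt_at_a hab'] at h0; norm_num at h0
      · intro hc
        rcases three_support hmem hc hab d1 d3 with h0 | h0 | h0 <;>
            rw [PiLp.sub_apply, hαe, hβe] at h0
        · rw [rt_at_a hab, rt_at_o d1 d2] at h0; norm_num at h0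
        · rw [rt_at_b hab, rt_at_o d3 d4] at h0; simp at h0; exact htne0 h0
        · rw [rt_at_o d1.symm d3.symm, rt_at_a hab'] at h0; norm_num at h0
  · -- ncard of Γ
    classical
    have hset : {x : EuclideanSpace ℝ (Fin l) | ∃ h : ℕ, 1 ≤ h ∧ h ≤ l / 2 ∧
        (x = stdVec l (2 * h - 1) - stdVec l (2 * h) ∨
         x = stdVec l (2 * h - 1) + stdVec l (2 * h))} =
        ↑(((Finset.Icc 1 (l / 2)) ×ˢ (Finset.univ : Finset Bool)).image (gfun l)) := by
      ext x
      simp only [Set.mem_setOf_eq, Finset.coe_image, Set.mem_image, Finset.mem_coe,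
        Finset.mem_product, Finset.mem_Icc, Finset.mem_univ, and_true]
      constructor
      · rintro ⟨h, h1, h2, hx | hx⟩
        · exact ⟨(h, false), ⟨h1, h2⟩, by simp [gfun, hx]⟩
        · exact ⟨(h, true), ⟨h1, h2⟩, by simp [gfun, hx]⟩
      · rintro ⟨⟨h, ε⟩, ⟨h1, h2⟩, rfl⟩
        refine ⟨h, h1, h2, ?_⟩
        rcases ε with _ | _
        · exact Or.inl (by simp [gfun])
        · exact Or.inr (by simp [gfun])
    rw [hset, Set.ncard_coe_finset]
    rw [Finset.card_image_of_injOn, Finset.card_product, Nat.card_Icc]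
    · simp [mul_comm]
    · intro p hp q hq hpq
      simp only [Finset.coe_product, Set.mem_prod, Finset.mem_coe, Finset.mem_Icc] at hp hq
      obtain ⟨a, b, hav, hbv, hab0, tα, htα, he⟩ := gamma_rep hp.1.1 hp.1.2
        (h := p.1) (x := gfun l p)
        (by rcases he2 : p.2 <;> simp [gfun, he2])
      obtain ⟨a', b', hav', hbv', hab0', tβ, htβ, he'⟩ := gamma_rep hq.1.1 hq.1.2
        (h := q.1) (x := gfun l q)
        (by rcases he2 : q.2 <;> simp [gfun, he2])
      rw [he, he'] at hpq
      obtain ⟨hAA, hBB, -, hTT⟩ := rt_inj hab0 hab0' (by norm_num)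
        (by rcases htα with rfl | rfl <;> norm_num) (by norm_num)
        (by rcases htβ with rfl | rfl <;> norm_num) hpq
      have hval := congrArg Fin.val hAA
      have h1 : p.1 = q.1 := by omega
      have ev : ∀ (r : ℕ × Bool) (c : Fin l), 1 ≤ r.1 → (c : ℕ) = 2 * r.1 - 1 →
          gfun l r c = if r.2 then 1 else -1 := by
        intro r c hr hc
        have ha1 : stdVec l (2 * r.1 - 1) c = 0 := by rw [stdVec_apply, if_neg (by omega)]
        have ha2 : stdVec l (2 * r.1) c = 1 := by rw [stdVec_apply, if_pos (by omega)]
        rcases hr2 : r.2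
        · simp [gfun, hr2, PiLp.sub_apply, ha1, ha2]
        · simp [gfun, hr2, PiLp.add_apply, ha1, ha2]
      have e1 : (if p.2 then (1 : ℝ) else -1) = tα := by
        rw [← ev p b hp.1.1 hbv, he, rt_at_b hab0.ne]
      have e2 : (if q.2 then (1 : ℝ) else -1) = tβ := by
        rw [← ev q b' hq.1.1 hbv', he', rt_at_b hab0'.ne]
      have h2 : p.2 = q.2 := by
        rw [← hTT] at e2
        rcases hp2 : p.2 <;> rcases hq2 : q.2 <;> rw [hp2] at e1 <;> rw [hq2] at e2 <;>
          simp only [if_true, if_false] at e1 e2 <;> first | rfl | (exfalso; rw [← e1] at e2; norm_num at e2)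
      exact Prod.ext h1 h2
  · obtain ⟨k, hk⟩ := hodd
    have := hbound S hS
    omega
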